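/- Let f : ℝ → ℝ be continuously differentiable, let β > 0 satisfy f(β) ≤ 0 ≤ f(−β), and let κ be a positive constant with κ ≥ max_{x∈[−β,β]}|f′(x)|. Then |f(ξ) + κξ| ≤ κβ for every ξ ∈ [−β, β]. -/

import Mathlib

/-- If f is continuously differentiable, β > 0 with f(β) ≤ 0 ≤ f(−β), and
κ > 0 dominates |f′| on [−β, β], then |f(ξ) + κξ| ≤ κβ for every ξ ∈ [−β, β]. -/
theorem stmt5 (f : ℝ → ℝ) (hf : ContDiff ℝ 1 f) (β κ : ℝ)
    (hβ : 0 < β) (hκ0 : 0 < κ)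
    (hfβ : f β ≤ 0) (hfβ' : 0 ≤ f (-β))
    (hκ : ∀ x ∈ Set.Icc (-β) β, |deriv f x| ≤ κ) :
    ∀ ξ ∈ Set.Icc (-β) β, |f ξ + κ * ξ| ≤ κ * β := by
  have hdf : Differentiable ℝ f := hf.differentiable one_ne_zero
  set g : ℝ → ℝ := fun x => f x + κ * x with hg
  have hgd : Differentiable ℝ g := hdf.add ((differentiable_id.const_mul κ))
  have hderiv : ∀ x, deriv g x = deriv f x + κ := by
    intro x
    have : HasDerivAt g (deriv f x + κ * 1) x :=
      (hdf x).hasDerivAt.add ((hasDerivAt_id x).const_mul κ)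
    simpa using this.deriv
  have hmono : MonotoneOn g (Set.Icc (-β) β) := by
    apply monotoneOn_of_deriv_nonneg (convex_Icc _ _) (hgd.continuous.continuousOn)
      (fun x _ => (hgd x).differentiableWithinAt)
    intro x hx
    rw [hderiv]
    have := hκ x (Set.mem_Icc_of_Ioo (by rwa [interior_Icc] at hx))
    have := abs_le.mp this
    linarith [this.1]
  intro ξ hξ
  have h1 : g ξ ≤ g β := hmono hξ (Set.right_mem_Icc.mpr (by linarith)) hξ.2
  have h2 : g (-β) ≤ g ξ := hmono (Set.left_mem_Icc.mpr (by linarith)) hξ hξ.1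
  have : g β ≤ κ * β := by simp only [hg]; linarith
  have : -(κ * β) ≤ g (-β) := by simp only [hg]; nlinarith
  rw [abs_le]
  constructor <;> simp only [hg] at h1 h2 <;> nlinarith
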